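/- Let m ≥ 1, let M ⊆ ℝ^m be an open subset, and let A be a finite set. Let P be the poset, ordered by inclusion, of open subsets of M that are disjoint unions of finitely many standard balls. Then the canonical map colim_{U ∈ P} sEmb(A × D^m, U) → sEmb(A × D^m, M) — the colimit, in the category of sets, of the functor U ↦ sEmb(A × D^m, U) with transition maps given by postcomposition with inclusions, mapped to sEmb(A × D^m, M) by postcomposition with the inclusions U ⊆ M — is a bijection. -/

import Mathlib

/-!
STATEMENT 15: For M ⊆ ℝ^m open and A a finite set, the canonical map
`colim_{U ∈ P} sEmb(A × D^m, U) → sEmb(A × D^m, M)` — colimit over the poset P of open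
subsets of M that are disjoint unions of finitely many standard balls — is a bijection.
-/

open CategoryTheory CategoryTheory.Limits

noncomputable section

abbrev Euc (m : ℕ) := EuclideanSpace ℝ (Fin m)

def aff {m : ℕ} (p : ℝ × Euc m) (x : Euc m) : Euc m := p.1 • x + p.2

def unitBall (m : ℕ) : Set (Euc m) := Metric.ball 0 1

def realizeBalls {m : ℕ} {A : Type} (u : A → ℝ × Euc m) :
    (A × (unitBall m)) → Euc m :=
  fun ax => aff (u ax.1) ax.2.1

def IsStdEmbBalls {m : ℕ} {A : Type} (X : Set (Euc m)) (u : A → ℝ × Euc m) : Prop :=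
  (∀ a, 0 < (u a).1) ∧ Function.Injective (realizeBalls u) ∧
    Set.range (realizeBalls u) ⊆ X

/-- `U` is a disjoint union of finitely many standard balls, contained in `M`. -/
def IsFinBallUnion {m : ℕ} (M : Set (Euc m)) (U : Set (Euc m)) : Prop :=
  ∃ (ι : Type) (_ : Fintype ι) (p : ι → ℝ × Euc m), (∀ i, 0 < (p i).1) ∧
    (∀ i i', i ≠ i' →
      Disjoint (Metric.ball (p i).2 (p i).1) (Metric.ball (p i').2 (p i').1)) ∧
    U = ⋃ i, Metric.ball (p i).2 (p i).1 ∧ U ⊆ M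

/-- The poset of open subsets of `M` that are disjoint unions of finitely many standard
balls, ordered by inclusion. -/
def FinBallUnionPoset (m : ℕ) (M : Set (Euc m)) : Type :=
  {U : Set (Euc m) // IsFinBallUnion M U}

instance (m : ℕ) (M : Set (Euc m)) : PartialOrder (FinBallUnionPoset m M) :=
  inferInstanceAs (PartialOrder {U : Set (Euc m) // IsFinBallUnion M U})

instance (m : ℕ) (M : Set (Euc m)) : Category (FinBallUnionPoset m M) :=
  Preorder.smallCategory _

/-- The functor `U ↦ sEmb(A × D^m, U)` on the poset `P`, with transition maps given by
postcomposition with inclusions. -/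
def embDiagram (m : ℕ) (M : Set (Euc m)) (A : Type) [Fintype A] :
    FinBallUnionPoset m M ⥤ Type where
  obj U := {u : A → ℝ × Euc m // IsStdEmbBalls U.1 u}
  map {U V} h := TypeCat.ofHom fun u => ⟨u.1, by
    obtain ⟨h1, h2, h3⟩ := u.2
    exact ⟨h1, h2, h3.trans (leOfHom h)⟩⟩
  map_id := by intros; rfl
  map_comp := by intros; rfl

/-- The canonical cocone on `embDiagram` with apex `sEmb(A × D^m, M)`. -/
def embCocone (m : ℕ) (M : Set (Euc m)) (A : Type) [Fintype A] :
    Cocone (embDiagram m M A) where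
  pt := {u : A → ℝ × Euc m // IsStdEmbBalls M u}
  ι :=
    { app := fun U => TypeCat.ofHom fun u => ⟨u.1, by
        obtain ⟨h1, h2, h3⟩ := u.2
        exact ⟨h1, h2, h3.trans (by
          obtain ⟨ι', _, p, _, _, _, hUM⟩ := U.2
          exact hUM)⟩⟩
      naturality := by intros; rfl }

lemma aff_range {m : ℕ} (p : ℝ × Euc m) (hc : 0 < p.1) :
    Set.range (fun x : unitBall m => aff p x.1) = Metric.ball p.2 p.1 := by
  ext y
  constructor
  · rintro ⟨⟨x, hx⟩, rfl⟩
    simp only [unitBall, Metric.mem_ball, dist_zero_right] at hx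
    simp only [aff, Metric.mem_ball, dist_eq_norm, add_sub_cancel_right, norm_smul,
      Real.norm_eq_abs, abs_of_pos hc]
    calc p.1 * ‖x‖ < p.1 * 1 := by exact mul_lt_mul_of_pos_left hx hc
      _ = p.1 := mul_one _
  · intro hy
    simp only [Metric.mem_ball, dist_eq_norm] at hy
    refine ⟨⟨p.1⁻¹ • (y - p.2), ?_⟩, ?_⟩
    · simp only [unitBall, Metric.mem_ball, dist_zero_right, norm_smul, Real.norm_eq_abs,
        abs_of_pos (inv_pos.2 hc)]
      rw [inv_mul_lt_iff₀ hc, mul_one]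
      exact hy
    · simp only [aff, smul_inv_smul₀ hc.ne', sub_add_cancel]

lemma range_realize {m : ℕ} {A : Type} (u : A → ℝ × Euc m) (hu : ∀ a, 0 < (u a).1) :
    Set.range (realizeBalls u) = ⋃ a, Metric.ball (u a).2 (u a).1 := by
  ext y
  constructor
  · rintro ⟨⟨a, x⟩, rfl⟩
    exact Set.mem_iUnion.2 ⟨a, by rw [← aff_range (u a) (hu a)]; exact ⟨x, rfl⟩⟩
  · intro hy
    obtain ⟨a, ha⟩ := Set.mem_iUnion.1 hy
    rw [← aff_range (u a) (hu a)] at ha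
    obtain ⟨x, hx⟩ := ha
    exact ⟨⟨a, x⟩, hx⟩

lemma disjoint_of_emb {m : ℕ} {A : Type} {u : A → ℝ × Euc m}
    (hu : ∀ a, 0 < (u a).1) (hinj : Function.Injective (realizeBalls u))
    {a a' : A} (h : a ≠ a') :
    Disjoint (Metric.ball (u a).2 (u a).1) (Metric.ball (u a').2 (u a').1) := by
  rw [Set.disjoint_left]
  intro y hy hy'
  rw [← aff_range (u a) (hu a)] at hy
  rw [← aff_range (u a') (hu a')] at hy'
  obtain ⟨x, hx⟩ := hy
  obtain ⟨x', hx'⟩ := hy'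
  have : realizeBalls u (a, x) = realizeBalls u (a', x') := by
    exact hx.trans hx'.symm
  exact h (congrArg Prod.fst (hinj this))

/-- The image of a standard embedding, as an element of the poset. -/
def embImage {m : ℕ} {M : Set (Euc m)} {A : Type} [Fintype A]
    (u : A → ℝ × Euc m) (hu : IsStdEmbBalls M u) : FinBallUnionPoset m M :=
  ⟨⋃ a, Metric.ball (u a).2 (u a).1,
    A, inferInstance, u, hu.1, fun a a' h => disjoint_of_emb hu.1 hu.2.1 h, rfl,
    by rw [← range_realize u hu.1]; exact hu.2.2⟩

lemma emb_over_image {m : ℕ} {M : Set (Euc m)} {A : Type} [Fintype A]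
    (u : A → ℝ × Euc m) (hu : IsStdEmbBalls M u) :
    IsStdEmbBalls (embImage u hu).1 u :=
  ⟨hu.1, hu.2.1, by rw [range_realize u hu.1]; exact le_refl _⟩

theorem stmt_15 (m : ℕ) (hm : 1 ≤ m) (M : Set (Euc m)) (hM : IsOpen M)
    (A : Type) [Fintype A] :
    Function.Bijective (colimit.desc (embDiagram m M A) (embCocone m M A)) := by
  constructor
  · intro x x' h
    obtain ⟨U, a, rfl⟩ := Types.jointly_surjective' x
    obtain ⟨V, b, rfl⟩ := Types.jointly_surjective' x'
    have hUd := types_congr_hom (colimit.ι_desc (embCocone m M A) U) a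
    have hVd := types_congr_hom (colimit.ι_desc (embCocone m M A) V) b
    simp only [types_comp_apply] at hUd hVd
    have hab : a.1 = b.1 := by
      have := hUd.symm.trans (h.trans hVd)
      exact congrArg Subtype.val this
    -- the common image
    have haM : IsStdEmbBalls M a.1 := ((embCocone m M A).ι.app U a).2
    set W := embImage a.1 haM with hW
    set w : (embDiagram m M A).obj W := (⟨a.1, emb_over_image a.1 haM⟩ : {v : A → ℝ × Euc m // IsStdEmbBalls W.1 v}) with hw
    have hWU : W ⟶ U := homOfLE (by
      change (⋃ c, Metric.ball (a.1 c).2 (a.1 c).1) ⊆ U.1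
      rw [← range_realize a.1 a.2.1]
      exact a.2.2.2)
    have hWV : W ⟶ V := homOfLE (by
      change (⋃ c, Metric.ball (a.1 c).2 (a.1 c).1) ⊆ V.1
      rw [← range_realize a.1 a.2.1, hab]
      exact b.2.2.2)
    have h1 : colimit.ι (embDiagram m M A) U a = colimit.ι (embDiagram m M A) W w := by
      have h0 := types_congr_hom (colimit.w (embDiagram m M A) hWU) w
      simp only [types_comp_apply] at h0
      have hb : (embDiagram m M A).map hWU w = a := Subtype.ext rfl
      rw [hb] at h0
      exact h0
    have h2 : colimit.ι (embDiagram m M A) V b = colimit.ι (embDiagram m M A) W w := by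
      have h0 := types_congr_hom (colimit.w (embDiagram m M A) hWV) w
      simp only [types_comp_apply] at h0
      have hb : (embDiagram m M A).map hWV w = b := Subtype.ext hab
      rw [hb] at h0
      exact h0
    rw [h1, h2]
  · intro y
    obtain ⟨u, hu⟩ := y
    set W := embImage u hu with hW
    set w : (embDiagram m M A).obj W := (⟨u, emb_over_image u hu⟩ : {v : A → ℝ × Euc m // IsStdEmbBalls W.1 v}) with hw
    refine ⟨colimit.ι (embDiagram m M A) W w, ?_⟩
    have := types_congr_hom (colimit.ι_desc (embCocone m M A) W) w
    simp only [types_comp_apply] at this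
    rw [this]
    exact Subtype.ext rfl

end
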